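/- For n ≥ 3, the signless Laplacian spectrum of K_n minus one edge consists of the two eigenvalues (3n-6 ± √((n-2)(n+6)))/2, each with multiplicity 1, together with n-2 with multiplicity n-2. -/

import Mathlib

open Finset
open scoped Classical

/-- The signless Laplacian matrix `Q(G) = D(G) + A(G)` of a simple graph. -/
noncomputable def sLap {V : Type*} [Fintype V] [DecidableEq V] (G : SimpleGraph V) :
    Matrix V V ℝ :=
  Matrix.diagonal (fun v => (G.degree v : ℝ)) + G.adjMatrix ℝ

/-- Number of eigenvalues (with multiplicity) of a Hermitian matrix lying in a set. -/
noncomputable def eigCount {V : Type*} [Fintype V] [DecidableEq V]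
    {M : Matrix V V ℝ} (hM : M.IsHermitian) (s : Set ℝ) : ℕ :=
  (Finset.univ.filter fun i => hM.eigenvalues i ∈ s).card

section Herm
variable {m : ℕ} {M : Matrix (Fin m) (Fin m) ℝ}

lemma herm_decomp (hM : M.IsHermitian) (t : ℝ) :
    M - t • 1 = (hM.eigenvectorUnitary : Matrix (Fin m) (Fin m) ℝ) *
      Matrix.diagonal (fun i => hM.eigenvalues i - t) *
      star (hM.eigenvectorUnitary : Matrix (Fin m) (Fin m) ℝ) := by
  set U : Matrix (Fin m) (Fin m) ℝ := (hM.eigenvectorUnitary : Matrix (Fin m) (Fin m) ℝ) with hU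
  have hUU : U * star U = 1 := (Matrix.mem_unitaryGroup_iff).mp hM.eigenvectorUnitary.2
  have h1 : t • (1 : Matrix (Fin m) (Fin m) ℝ) = U * (t • 1) * star U := by
    rw [Matrix.mul_smul, Matrix.mul_one, Matrix.smul_mul, hUU]
  have h2 : (RCLike.ofReal ∘ hM.eigenvalues : Fin m → ℝ) = hM.eigenvalues := by
    funext i; simp [RCLike.ofReal_real_eq_id]
  have h3 : Matrix.diagonal hM.eigenvalues - t • (1 : Matrix (Fin m) (Fin m) ℝ)
      = Matrix.diagonal (fun i => hM.eigenvalues i - t) := by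
    ext i j
    by_cases h : i = j <;> simp [Matrix.diagonal_apply, Matrix.one_apply, h]
  conv_lhs => rw [hM.spectral_theorem, Unitary.conjStarAlgAut_apply, h1, h2]
  rw [← Matrix.sub_mul, ← Matrix.mul_sub, h3]

lemma herm_det (hM : M.IsHermitian) (t : ℝ) :
    (M - t • 1).det = ∏ i, (hM.eigenvalues i - t) := by
  rw [herm_decomp hM t, Matrix.det_mul_right_comm]
  have hUU : (hM.eigenvectorUnitary : Matrix (Fin m) (Fin m) ℝ) *
      star (hM.eigenvectorUnitary : Matrix (Fin m) (Fin m) ℝ) = 1 :=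
    (Matrix.mem_unitaryGroup_iff).mp hM.eigenvectorUnitary.2
  rw [hUU, Matrix.one_mul, Matrix.det_diagonal]

lemma herm_rank (hM : M.IsHermitian) (t : ℝ) :
    (M - t • 1).rank = (univ.filter fun i => hM.eigenvalues i ≠ t).card := by
  rw [herm_decomp hM t]
  set U : Matrix (Fin m) (Fin m) ℝ := (hM.eigenvectorUnitary : Matrix (Fin m) (Fin m) ℝ) with hUdef
  have hUU : U * star U = 1 := (Matrix.mem_unitaryGroup_iff).mp hM.eigenvectorUnitary.2
  have hd : U.det * (star U).det = 1 := by rw [← Matrix.det_mul, hUU, Matrix.det_one]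
  have hu1 : IsUnit U.det := IsUnit.of_mul_eq_one _ hd
  have hu2 : IsUnit (star U).det := IsUnit.of_mul_eq_one _ (by rw [mul_comm] at hd; exact hd)
  rw [Matrix.rank_mul_eq_left_of_isUnit_det (star U) _ hu2,
    Matrix.rank_mul_eq_right_of_isUnit_det U _ hu1, Matrix.rank_diagonal]
  rw [Fintype.card_subtype]
  congr 1
  ext i
  simp [sub_ne_zero]

lemma herm_count (hM : M.IsHermitian) (t : ℝ) :
    (univ.filter fun i => hM.eigenvalues i = t).card = m - (M - t • 1).rank := by
  have h := Finset.card_filter_add_card_filter_not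
    (s := (univ : Finset (Fin m))) (p := fun i => hM.eigenvalues i = t)
  rw [herm_rank hM t]
  simp only [Finset.card_univ, Fintype.card_fin] at h
  simp only [ne_eq]
  omega

end Herm

section Graph
variable {n : ℕ} (hn : 3 ≤ n) {u v : Fin n} (huv : u ≠ v)

noncomputable def w2 (u v : Fin n) : Fin n → ℝ := fun i => if i = u ∨ i = v then 1 else 0

lemma adj_iff (i j : Fin n) :
    ((⊤ : SimpleGraph (Fin n)).deleteEdges {s(u, v)}).Adj i j ↔
      i ≠ j ∧ ¬(i = u ∧ j = v ∨ i = v ∧ j = u) := by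
  simp [SimpleGraph.deleteEdges_adj, Sym2.eq_iff]

include hn huv in
lemma deg_eq (i : Fin n) :
    (((⊤ : SimpleGraph (Fin n)).deleteEdges {s(u, v)}).degree i : ℝ)
      = ((n : ℝ) - 2) + (1 - w2 u v i * w2 u v i) := by
  rw [SimpleGraph.degree, SimpleGraph.neighborFinset_eq_filter]
  by_cases hi : i = u ∨ i = v
  · have hfilter : (univ.filter (((⊤ : SimpleGraph (Fin n)).deleteEdges {s(u, v)}).Adj i))
        = univ \ {u, v} := by
      ext j
      simp only [Finset.mem_filter, Finset.mem_univ, true_and, Finset.mem_sdiff,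
        Finset.mem_insert, Finset.mem_singleton, adj_iff]
      rcases hi with rfl | rfl
      · constructor
        · rintro ⟨h1, h2⟩; push_neg at h2 ⊢; exact ⟨fun h => (h1 h.symm).elim, fun h => (h2.1 rfl h).elim⟩
        · rintro h; push_neg at h; exact ⟨fun h' => h.1 h'.symm, by tauto⟩
      · constructor
        · rintro ⟨h1, h2⟩; push_neg at h2 ⊢; exact ⟨fun h => (h2.2 rfl h).elim, fun h => (h1 h.symm).elim⟩
        · rintro h; push_neg at h; exact ⟨fun h' => h.2 h'.symm, by tauto⟩
    rw [hfilter, Finset.card_sdiff_of_subset (Finset.subset_univ _), Finset.card_univ, Fintype.card_fin]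
    rw [Finset.card_insert_of_notMem (by simpa using huv), Finset.card_singleton]
    have hw : w2 u v i = 1 := by simp [w2, hi]
    rw [hw]
    have h2n : 2 ≤ n := by omega
    push_cast [Nat.cast_sub h2n]
    ring
  · push_neg at hi
    have hfilter : (univ.filter (((⊤ : SimpleGraph (Fin n)).deleteEdges {s(u, v)}).Adj i))
        = univ.erase i := by
      ext j
      simp only [Finset.mem_filter, Finset.mem_univ, true_and, Finset.mem_erase, adj_iff]
      constructor
      · rintro ⟨h1, _⟩; exact ⟨fun h => h1 h.symm, trivial⟩
      · rintro ⟨h1, _⟩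
        refine ⟨fun h => h1 h.symm, ?_⟩
        push_neg
        exact ⟨fun h _ => hi.1 h, fun h _ => hi.2 h⟩
    rw [hfilter, Finset.card_erase_of_mem (Finset.mem_univ _), Finset.card_univ, Fintype.card_fin]
    have hw : w2 u v i = 0 := by simp [w2, hi.1, hi.2]
    rw [hw]
    have h1n : 1 ≤ n := by omega
    push_cast [Nat.cast_sub h1n]
    ring

include hn huv in
lemma sLap_eq :
    sLap ((⊤ : SimpleGraph (Fin n)).deleteEdges {s(u, v)})
      = ((n : ℝ) - 2) • (1 : Matrix (Fin n) (Fin n) ℝ)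
        + Matrix.of (fun i j => 1 - w2 u v i * w2 u v j) := by
  ext i j
  simp only [sLap, Matrix.add_apply, Matrix.smul_apply, Matrix.of_apply, smul_eq_mul]
  by_cases h : i = j
  · subst h
    rw [Matrix.diagonal_apply_eq, SimpleGraph.adjMatrix_apply,
      if_neg (SimpleGraph.irrefl _)]
    have hd := deg_eq hn huv i
    simp only [Matrix.one_apply_eq, add_zero, mul_one]
    convert hd using 3
  · rw [Matrix.diagonal_apply_ne _ h, SimpleGraph.adjMatrix_apply, Matrix.one_apply_ne h]
    by_cases hij : (i = u ∨ i = v) ∧ (j = u ∨ j = v)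
    · have hadj : ¬ ((⊤ : SimpleGraph (Fin n)).deleteEdges {s(u, v)}).Adj i j := by
        rw [adj_iff]; push_neg; intro h'
        rcases hij.1 with rfl | rfl <;> rcases hij.2 with rfl | rfl <;> simp_all
      rw [if_neg hadj]
      have h1 : w2 u v i = 1 := by simp [w2, hij.1]
      have h2 : w2 u v j = 1 := by simp [w2, hij.2]
      rw [h1, h2]; ring
    · have hadj : ((⊤ : SimpleGraph (Fin n)).deleteEdges {s(u, v)}).Adj i j := by
        rw [adj_iff]; refine ⟨h, ?_⟩; tauto
      rw [if_pos hadj]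
      have hw : w2 u v i * w2 u v j = 0 := by
        rcases not_and_or.mp hij with h' | h'
        · simp [w2, if_neg h']
        · simp [w2, if_neg h']
      rw [hw]; ring

noncomputable def Xmat (u v : Fin n) : Matrix (Fin n) (Fin 2) ℝ :=
  Matrix.of fun i k => if k = 0 then 1 else w2 u v i

noncomputable def Ymat (u v : Fin n) : Matrix (Fin 2) (Fin n) ℝ :=
  Matrix.of fun k j => if k = 0 then 1 else -(w2 u v j)

lemma B_eq_XY :
    (Matrix.of (fun i j => 1 - w2 u v i * w2 u v j) : Matrix (Fin n) (Fin n) ℝ)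
      = Xmat u v * Ymat u v := by
  ext i j
  simp [Matrix.mul_apply, Fin.sum_univ_two, Xmat, Ymat]
  ring

include huv in
lemma sum_w2 : ∑ j, w2 u v j = 2 := by
  have h1 : ∑ j, w2 u v j = ((univ.filter fun j : Fin n => j = u ∨ j = v).card : ℝ) := by
    unfold w2; rw [Finset.sum_boole]
  have h2 : (univ.filter fun j : Fin n => j = u ∨ j = v) = {u, v} := by
    ext j; simp
  rw [h1, h2, Finset.card_insert_of_notMem (by simpa using huv), Finset.card_singleton]
  norm_num

include huv in
lemma sum_w2_sq : ∑ j, w2 u v j * w2 u v j = 2 := by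
  have h : ∀ j, w2 u v j * w2 u v j = w2 u v j := by
    intro j; by_cases h : j = u ∨ j = v <;> simp [w2, h]
  rw [Finset.sum_congr rfl fun j _ => h j, sum_w2 huv]

lemma rank_B_le :
    (Matrix.of (fun i j => 1 - w2 u v i * w2 u v j) : Matrix (Fin n) (Fin n) ℝ).rank ≤ 2 := by
  rw [B_eq_XY]
  exact le_trans (Matrix.rank_mul_le_left _ _)
    (by simpa using Matrix.rank_le_card_width (Xmat u v))

include huv in
lemma det_zero (μ : ℝ) (hμ : μ ≠ 0) (hrel : μ^2 = ((n:ℝ)-2)*μ + 2*((n:ℝ)-2)) :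
    ((Matrix.of (fun i j => 1 - w2 u v i * w2 u v j) : Matrix (Fin n) (Fin n) ℝ)
      - μ • 1).det = 0 := by
  set c : ℝ := (-μ)⁻¹ with hc
  have hB : (Matrix.of (fun i j => 1 - w2 u v i * w2 u v j) : Matrix (Fin n) (Fin n) ℝ) - μ • 1
      = (-μ) • (1 + (c • Xmat u v) * Ymat u v) := by
    have h1 : (-μ) • ((c • Xmat u v) * Ymat u v) = Xmat u v * Ymat u v := by
      rw [Matrix.smul_mul, smul_smul, mul_inv_cancel₀ (neg_ne_zero.mpr hμ), one_smul]
    rw [B_eq_XY, smul_add, h1, neg_smul]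
    abel
  rw [hB, Matrix.det_smul, Matrix.det_one_add_mul_comm]
  have e00 : (Ymat u v * (c • Xmat u v)) 0 0 = (n : ℝ) * c := by
    simp [Matrix.mul_apply, Xmat, Ymat, Finset.sum_const, Finset.card_univ]
  have e01 : (Ymat u v * (c • Xmat u v)) 0 1 = c * 2 := by
    simp only [Matrix.mul_apply, Matrix.smul_apply, Xmat, Ymat, Matrix.of_apply, smul_eq_mul]
    norm_num
    rw [← Finset.mul_sum, sum_w2 huv]
  have e10 : (Ymat u v * (c • Xmat u v)) 1 0 = -(2 * c) := by
    simp only [Matrix.mul_apply, Matrix.smul_apply, Xmat, Ymat, Matrix.of_apply, smul_eq_mul]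
    norm_num
    rw [← Finset.sum_mul, sum_w2 huv]
  have e11 : (Ymat u v * (c • Xmat u v)) 1 1 = -(c * 2) := by
    simp only [Matrix.mul_apply, Matrix.smul_apply, Xmat, Ymat, Matrix.of_apply, smul_eq_mul]
    norm_num
    rw [Finset.sum_congr rfl (fun x _ => by ring :
      ∀ x ∈ univ, w2 u v x * (c * w2 u v x) = c * (w2 u v x * w2 u v x)),
      ← Finset.mul_sum, sum_w2_sq huv]
  rw [Matrix.det_fin_two]
  simp only [Matrix.add_apply, Matrix.one_apply_eq,
    Matrix.one_apply_ne (show (0:Fin 2) ≠ 1 by decide),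
    Matrix.one_apply_ne (show (1:Fin 2) ≠ 0 by decide), e00, e01, e10, e11]
  have hz : (1 + (n:ℝ) * c) * (1 + -(c * 2)) - (0 + c * 2) * (0 + -(2 * c)) = 0 := by
    rw [hc]
    have h' : (-μ) ≠ 0 := neg_ne_zero.mpr hμ
    field_simp
    linear_combination hrel
  rw [hz, mul_zero]

end Graph

theorem stmt9 {n : ℕ} (hn : 3 ≤ n) {u v : Fin n} (huv : u ≠ v)
    (hQ : (sLap ((⊤ : SimpleGraph (Fin n)).deleteEdges {s(u, v)})).IsHermitian) :
    (Finset.univ.filter fun i =>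
        hQ.eigenvalues i = (3 * (n : ℝ) - 6 + Real.sqrt (((n : ℝ) - 2) * ((n : ℝ) + 6))) / 2).card = 1 ∧
    (Finset.univ.filter fun i =>
        hQ.eigenvalues i = (3 * (n : ℝ) - 6 - Real.sqrt (((n : ℝ) - 2) * ((n : ℝ) + 6))) / 2).card = 1 ∧
    (Finset.univ.filter fun i => hQ.eigenvalues i = (n : ℝ) - 2).card = n - 2 := by
  have h3r : (3:ℝ) ≤ (n:ℝ) := by exact_mod_cast hn
  set s : ℝ := Real.sqrt (((n:ℝ) - 2) * ((n:ℝ) + 6)) with hsdef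
  have hnn : (0:ℝ) ≤ ((n:ℝ) - 2) * ((n:ℝ) + 6) := by nlinarith
  have hs2 : s^2 = ((n:ℝ) - 2) * ((n:ℝ) + 6) := Real.sq_sqrt hnn
  have hspos : 0 < s := Real.sqrt_pos.mpr (by nlinarith)
  have hμp : (((n:ℝ)-2+s)/2) ≠ 0 := by intro h; linarith
  have hμm : (((n:ℝ)-2-s)/2) ≠ 0 := by
    intro h
    have hs_eq : s = (n:ℝ)-2 := by linarith
    rw [hs_eq] at hs2; nlinarith
  have hrelp : (((n:ℝ)-2+s)/2)^2 = ((n:ℝ)-2)*(((n:ℝ)-2+s)/2) + 2*((n:ℝ)-2) := by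
    linear_combination (1/4 : ℝ) * hs2
  have hrelm : (((n:ℝ)-2-s)/2)^2 = ((n:ℝ)-2)*(((n:ℝ)-2-s)/2) + 2*((n:ℝ)-2) := by
    linear_combination (1/4 : ℝ) * hs2
  have hQB : sLap ((⊤ : SimpleGraph (Fin n)).deleteEdges {s(u, v)}) - ((n:ℝ) - 2) • 1
      = (Matrix.of (fun i j => 1 - w2 u v i * w2 u v j) : Matrix (Fin n) (Fin n) ℝ) := by
    rw [sLap_eq hn huv, add_sub_cancel_left]
  -- count of eigenvalue n - 2
  have hc0 : (univ.filter fun i => hQ.eigenvalues i = (n:ℝ)-2).card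
      = n - (sLap ((⊤ : SimpleGraph (Fin n)).deleteEdges {s(u, v)}) - ((n:ℝ)-2) • 1).rank :=
    herm_count hQ ((n:ℝ)-2)
  have hrank : (sLap ((⊤ : SimpleGraph (Fin n)).deleteEdges {s(u, v)}) - ((n:ℝ)-2) • 1).rank ≤ 2 := by
    rw [hQB]; exact rank_B_le
  -- the two extreme eigenvalues occur
  have hdet : ∀ μ : ℝ, μ ≠ 0 → μ^2 = ((n:ℝ)-2)*μ + 2*((n:ℝ)-2) →
      1 ≤ (univ.filter fun i => hQ.eigenvalues i = ((n:ℝ)-2) + μ).card := by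
    intro μ hμ hrel
    have hsplit : sLap ((⊤ : SimpleGraph (Fin n)).deleteEdges {s(u, v)}) - (((n:ℝ)-2) + μ) • 1
        = (Matrix.of (fun i j => 1 - w2 u v i * w2 u v j) : Matrix (Fin n) (Fin n) ℝ) - μ • 1 := by
      rw [add_smul, ← hQB]; abel
    have hd0 : (sLap ((⊤ : SimpleGraph (Fin n)).deleteEdges {s(u, v)})
        - (((n:ℝ)-2) + μ) • 1).det = 0 := by
      rw [hsplit]; exact det_zero huv μ hμ hrel
    rw [herm_det hQ (((n:ℝ)-2) + μ)] at hd0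
    obtain ⟨i, -, hi⟩ := Finset.prod_eq_zero_iff.mp hd0
    exact Finset.card_pos.mpr ⟨i, Finset.mem_filter.mpr ⟨Finset.mem_univ _, sub_eq_zero.mp hi⟩⟩
  have hlp : (3 * (n:ℝ) - 6 + s) / 2 = ((n:ℝ)-2) + ((n:ℝ)-2+s)/2 := by ring
  have hlm : (3 * (n:ℝ) - 6 - s) / 2 = ((n:ℝ)-2) + ((n:ℝ)-2-s)/2 := by ring
  have hp1 : 1 ≤ (univ.filter fun i => hQ.eigenvalues i = (3 * (n:ℝ) - 6 + s) / 2).card := by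
    rw [hlp]; exact hdet _ hμp hrelp
  have hm1 : 1 ≤ (univ.filter fun i => hQ.eigenvalues i = (3 * (n:ℝ) - 6 - s) / 2).card := by
    rw [hlm]; exact hdet _ hμm hrelm
  -- pairwise distinct eigenvalue targets
  have hd12 : (3 * (n:ℝ) - 6 + s) / 2 ≠ (3 * (n:ℝ) - 6 - s) / 2 := by
    intro h; nlinarith
  have hd13 : (3 * (n:ℝ) - 6 + s) / 2 ≠ (n:ℝ) - 2 := by
    intro h; apply hμp; linarith [hlp]
  have hd23 : (3 * (n:ℝ) - 6 - s) / 2 ≠ (n:ℝ) - 2 := by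
    intro h; apply hμm; linarith [hlm]
  set Fp := univ.filter fun i => hQ.eigenvalues i = (3 * (n:ℝ) - 6 + s) / 2 with hFp
  set Fm := univ.filter fun i => hQ.eigenvalues i = (3 * (n:ℝ) - 6 - s) / 2 with hFm
  set F0 := univ.filter fun i => hQ.eigenvalues i = (n:ℝ) - 2 with hF0
  have hdisj1 : Disjoint Fp Fm := by
    rw [Finset.disjoint_left]
    intro a ha hb
    rw [hFp, Finset.mem_filter] at ha
    rw [hFm, Finset.mem_filter] at hb
    exact hd12 (ha.2 ▸ hb.2 ▸ rfl)
  have hdisj2 : Disjoint Fp F0 := by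
    rw [Finset.disjoint_left]
    intro a ha hb
    rw [hFp, Finset.mem_filter] at ha
    rw [hF0, Finset.mem_filter] at hb
    exact hd13 (ha.2 ▸ hb.2 ▸ rfl)
  have hdisj3 : Disjoint Fm F0 := by
    rw [Finset.disjoint_left]
    intro a ha hb
    rw [hFm, Finset.mem_filter] at ha
    rw [hF0, Finset.mem_filter] at hb
    exact hd23 (ha.2 ▸ hb.2 ▸ rfl)
  have hsum : Fp.card + Fm.card + F0.card ≤ n := by
    have h2 : Disjoint (Fp ∪ Fm) F0 := Finset.disjoint_union_left.mpr ⟨hdisj2, hdisj3⟩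
    calc Fp.card + Fm.card + F0.card
        = ((Fp ∪ Fm) ∪ F0).card := by
          rw [Finset.card_union_of_disjoint h2, Finset.card_union_of_disjoint hdisj1]
      _ ≤ (univ : Finset (Fin n)).card := Finset.card_le_card (Finset.subset_univ _)
      _ = n := by simp
  refine ⟨?_, ?_, ?_⟩ <;> omega
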